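/- For every k ∈ ℝ³ and every real symmetric 3×3 matrix h, the square of the symbol of rot₂ is given by: (σ_k(rot₂)(σ_k(rot₂)(h)))_{ij} = 3 Σ_ℓ k_ℓ ( k_i h_{jℓ} + k_j h_{iℓ} ) − 4 |k|² h_{ij} + 2 ( (|k|² δ_{ij} − k_i k_j) tr h − (Σ_{ℓ,m} k_ℓ k_m h_{ℓm}) δ_{ij} ). -/
import Mathlib


open scoped BigOperators

/-- The Levi-Civita symbol `ε_{ijk}` on three indices. -/
def eps : Fin 3 → Fin 3 → Fin 3 → ℝ := fun i j k =>
  if (i, j, k) = ((0 : Fin 3), (1 : Fin 3), (2 : Fin 3)) ∨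
     (i, j, k) = ((1 : Fin 3), (2 : Fin 3), (0 : Fin 3)) ∨
     (i, j, k) = ((2 : Fin 3), (0 : Fin 3), (1 : Fin 3)) then 1
  else if (i, j, k) = ((2 : Fin 3), (1 : Fin 3), (0 : Fin 3)) ∨
     (i, j, k) = ((1 : Fin 3), (0 : Fin 3), (2 : Fin 3)) ∨
     (i, j, k) = ((0 : Fin 3), (2 : Fin 3), (1 : Fin 3)) then -1
  else 0

/-- The Kronecker delta `δ_{ij}`. -/
def kdelta (i j : Fin 3) : ℝ := if i = j then 1 else 0

/-- The cross product on `ℝ³`: `(a × b)_i = Σ_{j,l} ε_{ijl} a_j b_l`. -/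
def cross (a b : Fin 3 → ℝ) : Fin 3 → ℝ := fun i => ∑ j, ∑ l, eps i j l * a j * b l

/-- The symbol of `rot₂`:
`(σ_k(rot₂)(h))_{ij} = Σ_{ℓ,m} ( ε_{iℓm} k_ℓ h_{mj} + ε_{jℓm} k_ℓ h_{mi} )`. -/
def sigRot2 (k : Fin 3 → ℝ) (h : Fin 3 → Fin 3 → ℝ) : Fin 3 → Fin 3 → ℝ :=
  fun i j => ∑ l, ∑ m, (eps i l m * k l * h m j + eps j l m * k l * h m i)

/-- for every `k ∈ ℝ³` and every symmetric `h`, the square of the symbol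
of `rot₂` is
`(σ_k(rot₂)²(h))_{ij} = 3 Σ_ℓ k_ℓ ( k_i h_{jℓ} + k_j h_{iℓ} ) − 4 |k|² h_{ij}
  + 2 ( (|k|² δ_{ij} − k_i k_j) tr h − (Σ_{ℓ,m} k_ℓ k_m h_{ℓm}) δ_{ij} )`. -/

lemma fin_mk0 (hlt : 0 < 3) : (⟨0, hlt⟩ : Fin 3) = 0 := rfl
lemma fin_mk1 (hlt : 1 < 3) : (⟨1, hlt⟩ : Fin 3) = 1 := rfl
lemma fin_mk2 (hlt : 2 < 3) : (⟨2, hlt⟩ : Fin 3) = 2 := rfl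

lemma cross0 (a b : Fin 3 → ℝ) : cross a b 0 = a 1 * b 2 - a 2 * b 1 := by
  simp [cross, eps, Fin.sum_univ_three]; ring

lemma cross1 (a b : Fin 3 → ℝ) : cross a b 1 = a 2 * b 0 - a 0 * b 2 := by
  simp [cross, eps, Fin.sum_univ_three]; ring

lemma cross2 (a b : Fin 3 → ℝ) : cross a b 2 = a 0 * b 1 - a 1 * b 0 := by
  simp [cross, eps, Fin.sum_univ_three]; ring

lemma sig_eq (k : Fin 3 → ℝ) (h : Fin 3 → Fin 3 → ℝ) (i j : Fin 3) :
    sigRot2 k h i j = cross k (fun m => h m j) i + cross k (fun m => h m i) j := by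
  simp only [sigRot2, cross, ← Finset.sum_add_distrib]

set_option maxHeartbeats 1600000 in
theorem stmt19 (k : Fin 3 → ℝ) (h : Fin 3 → Fin 3 → ℝ)
    (h_symm : ∀ i j, h i j = h j i) :
    ∀ i j, sigRot2 k (sigRot2 k h) i j =
      3 * (∑ l, k l * (k i * h j l + k j * h i l))
      - 4 * (∑ l, k l ^ 2) * h i j
      + 2 * (((∑ l, k l ^ 2) * kdelta i j - k i * k j) * (∑ l, h l l)
             - (∑ l, ∑ m, k l * k m * h l m) * kdelta i j) := by
  intro i j
  have h01 := h_symm 0 1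
  have h02 := h_symm 0 2
  have h12 := h_symm 1 2
  simp only [sig_eq, kdelta, Fin.sum_univ_three]
  fin_cases i <;> fin_cases j <;>
    simp only [fin_mk0, fin_mk1, fin_mk2, cross0, cross1, cross2, h01, h02, h12] <;>
    norm_num [Fin.ext_iff] <;> ring
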